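/- Let 0 < p < 1, C₁ > 0, S > 0, and let u : [0,S] → ℝ be nonnegative and differentiable with |u′(s)| ≤ C₁·(2·s^{p/(1−p)}·u(s) + s^{3p/(1−p)}/4) for all s ∈ [0,S]. Set C₂ = 2(1−p)C₁ and C₃ = C₂/(8(1+2p)). Then for all s ∈ [0,S], e^{−C₂·s^{1/(1−p)}}·(u(0) − C₃·e^{C₂·s^{1/(1−p)}}·s^{(1+2p)/(1−p)}) ≤ u(s) ≤ e^{C₂·s^{1/(1−p)}}·(u(0) + C₃·s^{(1+2p)/(1−p)}). -/

import Mathlib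

open MeasureTheory

/-- Two-sided Gronwall-type bound (1.17) for the squared speed of an
`L̃_p`-geodesic: if `u : [0,S] → ℝ` is nonnegative and differentiable with
`|u'(s)| ≤ C₁ (2 s^{p/(1-p)} u(s) + s^{3p/(1-p)}/4)`, then with
`C₂ = 2(1-p)C₁` and `C₃ = C₂/(8(1+2p))` one has for all `s ∈ [0,S]`:
`e^{-C₂ s^{1/(1-p)}} (u(0) - C₃ e^{C₂ s^{1/(1-p)}} s^{(1+2p)/(1-p)}) ≤ u(s)
  ≤ e^{C₂ s^{1/(1-p)}} (u(0) + C₃ s^{(1+2p)/(1-p)})`. -/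
theorem gronwall_speed_bound (p C₁ S : ℝ) (hp : 0 < p) (hp1 : p < 1)
    (hC₁ : 0 < C₁) (hS : 0 < S)
    (u u' : ℝ → ℝ)
    (hu_nonneg : ∀ s ∈ Set.Icc 0 S, 0 ≤ u s)
    (hu_deriv : ∀ s ∈ Set.Icc 0 S, HasDerivAt u (u' s) s)
    (hu_bound : ∀ s ∈ Set.Icc 0 S,
      |u' s| ≤ C₁ * (2 * s ^ (p / (1 - p)) * u s + s ^ (3 * p / (1 - p)) / 4))
    (C₂ C₃ : ℝ) (hC₂ : C₂ = 2 * (1 - p) * C₁) (hC₃ : C₃ = C₂ / (8 * (1 + 2 * p))) :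
    ∀ s ∈ Set.Icc 0 S,
      Real.exp (-C₂ * s ^ (1 / (1 - p))) *
          (u 0 - C₃ * Real.exp (C₂ * s ^ (1 / (1 - p))) * s ^ ((1 + 2 * p) / (1 - p)))
        ≤ u s ∧
      u s ≤ Real.exp (C₂ * s ^ (1 / (1 - p))) *
          (u 0 + C₃ * s ^ ((1 + 2 * p) / (1 - p))) := by
  have h1p : (0:ℝ) < 1 - p := by linarith
  have h12p : (0:ℝ) < 1 + 2 * p := by linarith
  set α := p / (1 - p) with hαdef
  have hα : 0 < α := div_pos hp h1p
  have hr1 : 1 / (1 - p) = α + 1 := by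
    rw [hαdef]; field_simp; ring
  have hr3 : (1 + 2 * p) / (1 - p) = 3 * α + 1 := by
    rw [hαdef]; field_simp; ring
  have h3α : 3 * p / (1 - p) = 3 * α := by rw [hαdef]; ring
  have hC₂pos : 0 < C₂ := by rw [hC₂]; positivity
  have hC₃pos : 0 < C₃ := by rw [hC₃]; positivity
  -- derivative of φ(t) = C₂ t^(α+1)
  have hφ : ∀ s : ℝ, HasDerivAt (fun t => C₂ * t ^ (α + 1)) (2 * C₁ * s ^ α) s := by
    intro s
    have h := (Real.hasDerivAt_rpow_const (x := s) (p := α + 1)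
      (Or.inr (by linarith))).const_mul C₂
    refine h.congr_deriv ?_
    rw [add_sub_cancel_right, hC₂, hαdef]
    field_simp
    ring
  have hψ : ∀ s : ℝ, HasDerivAt (fun t => C₃ * t ^ (3 * α + 1)) (C₁ / 4 * s ^ (3 * α)) s := by
    intro s
    have h := (Real.hasDerivAt_rpow_const (x := s) (p := 3 * α + 1)
      (Or.inr (by linarith))).const_mul C₃
    refine h.congr_deriv ?_
    rw [add_sub_cancel_right, hC₃, hC₂, hαdef]
    field_simp
    ring
  -- the bound on u' in usable form
  have hb : ∀ x ∈ Set.Icc (0:ℝ) S,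
      u' x ≤ C₁ * (2 * x ^ α * u x + x ^ (3 * α) / 4) ∧
      -(C₁ * (2 * x ^ α * u x + x ^ (3 * α) / 4)) ≤ u' x := by
    intro x hx
    have := hu_bound x hx
    rw [h3α] at this
    exact ⟨le_trans (le_abs_self _) this, le_trans (neg_le_neg this) (neg_abs_le _)⟩
  -- Upper bound function H
  set H : ℝ → ℝ := fun t => Real.exp (-(C₂ * t ^ (α + 1))) * u t - C₃ * t ^ (3 * α + 1)
    with hHdef
  have hH : ∀ s ∈ Set.Icc (0:ℝ) S, HasDerivAt H
      (Real.exp (-(C₂ * s ^ (α + 1))) * (u' s - 2 * C₁ * s ^ α * u s)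
        - C₁ / 4 * s ^ (3 * α)) s := by
    intro s hs
    have h := (((hφ s).neg.exp.mul (hu_deriv s hs)).sub (hψ s))
    refine h.congr_deriv ?_
    simp only [Pi.neg_apply]
    ring
  have hHanti : AntitoneOn H (Set.Icc 0 S) := by
    apply antitoneOn_of_deriv_nonpos (convex_Icc 0 S)
    · intro x hx; exact (hH x hx).continuousAt.continuousWithinAt
    · intro x hx
      rw [interior_Icc] at hx
      exact (hH x (Set.Ioo_subset_Icc_self hx)).differentiableAt.differentiableWithinAt
    · intro x hx
      rw [interior_Icc] at hx
      rw [(hH x (Set.Ioo_subset_Icc_self hx)).deriv]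
      have hx0 : 0 ≤ x := le_of_lt hx.1
      have hE1 : Real.exp (-(C₂ * x ^ (α + 1))) ≤ 1 := by
        rw [Real.exp_le_one_iff]
        have : 0 ≤ x ^ (α + 1) := Real.rpow_nonneg hx0 _
        nlinarith
      have hE0 : 0 < Real.exp (-(C₂ * x ^ (α + 1))) := Real.exp_pos _
      have h3 : 0 ≤ x ^ (3 * α) := Real.rpow_nonneg hx0 _
      have hub := (hb x (Set.Ioo_subset_Icc_self hx)).1
      have key : u' x - 2 * C₁ * x ^ α * u x ≤ C₁ / 4 * x ^ (3 * α) := by nlinarith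
      have : Real.exp (-(C₂ * x ^ (α + 1))) * (u' x - 2 * C₁ * x ^ α * u x)
          ≤ C₁ / 4 * x ^ (3 * α) := by
        calc Real.exp (-(C₂ * x ^ (α + 1))) * (u' x - 2 * C₁ * x ^ α * u x)
            ≤ Real.exp (-(C₂ * x ^ (α + 1))) * (C₁ / 4 * x ^ (3 * α)) :=
              mul_le_mul_of_nonneg_left key hE0.le
          _ ≤ 1 * (C₁ / 4 * x ^ (3 * α)) := by
              apply mul_le_mul_of_nonneg_right hE1 (by positivity)
          _ = C₁ / 4 * x ^ (3 * α) := one_mul _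
      linarith
  -- Lower bound function M
  set M : ℝ → ℝ := fun t => Real.exp (C₂ * t ^ (α + 1)) * (u t + C₃ * t ^ (3 * α + 1))
    with hMdef
  have hM : ∀ s ∈ Set.Icc (0:ℝ) S, HasDerivAt M
      (Real.exp (C₂ * s ^ (α + 1)) * (2 * C₁ * s ^ α) * (u s + C₃ * s ^ (3 * α + 1))
        + Real.exp (C₂ * s ^ (α + 1)) * (u' s + C₁ / 4 * s ^ (3 * α))) s := by
    intro s hs
    exact ((hφ s).exp.mul ((hu_deriv s hs).add (hψ s)))
  have hMmono : MonotoneOn M (Set.Icc 0 S) := by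
    apply monotoneOn_of_deriv_nonneg (convex_Icc 0 S)
    · intro x hx; exact (hM x hx).continuousAt.continuousWithinAt
    · intro x hx
      rw [interior_Icc] at hx
      exact (hM x (Set.Ioo_subset_Icc_self hx)).differentiableAt.differentiableWithinAt
    · intro x hx
      rw [interior_Icc] at hx
      rw [(hM x (Set.Ioo_subset_Icc_self hx)).deriv]
      have hx0 : 0 ≤ x := le_of_lt hx.1
      have hE0 : 0 < Real.exp (C₂ * x ^ (α + 1)) := Real.exp_pos _
      have h3 : 0 ≤ x ^ (3 * α) := Real.rpow_nonneg hx0 _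
      have hxa : 0 ≤ x ^ α := Real.rpow_nonneg hx0 _
      have hx31 : 0 ≤ x ^ (3 * α + 1) := Real.rpow_nonneg hx0 _
      have hun : 0 ≤ u x := hu_nonneg x (Set.Ioo_subset_Icc_self hx)
      have hlb := (hb x (Set.Ioo_subset_Icc_self hx)).2
      have key : 0 ≤ 2 * C₁ * x ^ α * (u x + C₃ * x ^ (3 * α + 1))
          + (u' x + C₁ / 4 * x ^ (3 * α)) := by
        nlinarith [mul_nonneg (mul_nonneg hC₁.le hxa) (mul_nonneg hC₃pos.le hx31)]
      nlinarith [mul_le_mul_of_nonneg_left key hE0.le]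
  intro s hs
  have h0mem : (0:ℝ) ∈ Set.Icc (0:ℝ) S := ⟨le_refl 0, hS.le⟩
  have hs0 : 0 ≤ s := hs.1
  have hzero1 : (0:ℝ) ^ (α + 1) = 0 := Real.zero_rpow (by positivity)
  have hzero3 : (0:ℝ) ^ (3 * α + 1) = 0 := Real.zero_rpow (by positivity)
  have hH0 : H 0 = u 0 := by
    simp [hHdef, hzero1, hzero3]
  have hM0 : M 0 = u 0 := by
    simp [hMdef, hzero1, hzero3]
  have hHs : H s ≤ u 0 := hH0 ▸ hHanti h0mem hs hs0
  have hMs : u 0 ≤ M s := hM0 ▸ hMmono h0mem hs hs0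
  rw [hr1, hr3]
  have hEinv : Real.exp (-(C₂ * s ^ (α + 1))) * Real.exp (C₂ * s ^ (α + 1)) = 1 := by
    rw [← Real.exp_add]; simp
  have hE0 : 0 < Real.exp (C₂ * s ^ (α + 1)) := Real.exp_pos _
  have hE0' : 0 < Real.exp (-(C₂ * s ^ (α + 1))) := Real.exp_pos _
  constructor
  · -- lower bound
    have hMs' : u 0 ≤ Real.exp (C₂ * s ^ (α + 1)) * (u s + C₃ * s ^ (3 * α + 1)) := hMs
    have h2 : Real.exp (-(C₂ * s ^ (α + 1))) * u 0 ≤ u s + C₃ * s ^ (3 * α + 1) := by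
      calc Real.exp (-(C₂ * s ^ (α + 1))) * u 0
          ≤ Real.exp (-(C₂ * s ^ (α + 1))) *
            (Real.exp (C₂ * s ^ (α + 1)) * (u s + C₃ * s ^ (3 * α + 1))) :=
            mul_le_mul_of_nonneg_left hMs' hE0'.le
        _ = u s + C₃ * s ^ (3 * α + 1) := by rw [← mul_assoc, hEinv, one_mul]
    have hrw : -C₂ * s ^ (α + 1) = -(C₂ * s ^ (α + 1)) := by ring
    rw [hrw]
    have : Real.exp (-(C₂ * s ^ (α + 1))) *
        (u 0 - C₃ * Real.exp (C₂ * s ^ (α + 1)) * s ^ (3 * α + 1))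
        = Real.exp (-(C₂ * s ^ (α + 1))) * u 0 - C₃ * s ^ (3 * α + 1) := by
      have : Real.exp (-(C₂ * s ^ (α + 1))) * (C₃ * Real.exp (C₂ * s ^ (α + 1)) *
          s ^ (3 * α + 1)) = C₃ * s ^ (3 * α + 1) := by
        calc Real.exp (-(C₂ * s ^ (α + 1))) * (C₃ * Real.exp (C₂ * s ^ (α + 1)) *
            s ^ (3 * α + 1))
            = (Real.exp (-(C₂ * s ^ (α + 1))) * Real.exp (C₂ * s ^ (α + 1))) *
              (C₃ * s ^ (3 * α + 1)) := by ring
          _ = C₃ * s ^ (3 * α + 1) := by rw [hEinv, one_mul]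
      linarith [this]
    linarith [this, h2]
  · -- upper bound
    have hHs' : Real.exp (-(C₂ * s ^ (α + 1))) * u s - C₃ * s ^ (3 * α + 1) ≤ u 0 := hHs
    have h2 : Real.exp (-(C₂ * s ^ (α + 1))) * u s ≤ u 0 + C₃ * s ^ (3 * α + 1) := by
      linarith
    calc u s = Real.exp (C₂ * s ^ (α + 1)) *
          (Real.exp (-(C₂ * s ^ (α + 1))) * u s) := by
          rw [← mul_assoc, mul_comm (Real.exp (C₂ * s ^ (α + 1))), hEinv, one_mul]
      _ ≤ Real.exp (C₂ * s ^ (α + 1)) * (u 0 + C₃ * s ^ (3 * α + 1)) :=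
          mul_le_mul_of_nonneg_left h2 hE0.le
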